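/- Let y₁, y₂, y₃ : [0,1] → ℝ be continuously twice differentiable functions such that for all x ∈ (0,1): y₁″(x) − x⁻¹·(1+3x²)·(1−x²)⁻¹·y₁′(x) + (1/6)·(y₁′(x))² + (1/3)·((y₂′(x))² + y₂′(x)·y₃′(x) + (y₃′(x))²) = 0. If there exists x₁ ∈ (0,1) with y₁′(x₁) = 0, then y₁′(x) = 0 for all x ∈ [x₁, 1]. -/

import Mathlib

theorem stmt_17 (y₁ y₁' y₁'' y₂ y₂' y₃ y₃' : ℝ → ℝ)
    (hy₁ : ∀ x ∈ Set.Ioo (0:ℝ) 1, HasDerivAt y₁ (y₁' x) x)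
    (hy₁' : ∀ x ∈ Set.Ioo (0:ℝ) 1, HasDerivAt y₁' (y₁'' x) x)
    (hy₂ : ∀ x ∈ Set.Ioo (0:ℝ) 1, HasDerivAt y₂ (y₂' x) x)
    (hy₃ : ∀ x ∈ Set.Ioo (0:ℝ) 1, HasDerivAt y₃ (y₃' x) x)
    (hc₁ : ContinuousOn y₁' (Set.Icc 0 1))
    (hc₁' : ContinuousOn y₁'' (Set.Icc 0 1))
    (hc₂ : ContinuousOn y₂' (Set.Icc 0 1))
    (hc₃ : ContinuousOn y₃' (Set.Icc 0 1))
    (hODE : ∀ x ∈ Set.Ioo (0:ℝ) 1,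
      y₁'' x - x⁻¹ * (1 + 3*x^2) * (1 - x^2)⁻¹ * y₁' x
        + (1/6) * (y₁' x)^2
        + (1/3) * ((y₂' x)^2 + y₂' x * y₃' x + (y₃' x)^2) = 0)
    (x₁ : ℝ) (hx₁ : x₁ ∈ Set.Ioo (0:ℝ) 1) (hzero : y₁' x₁ = 0) :
    ∀ x ∈ Set.Icc x₁ 1, y₁' x = 0 := by
  obtain ⟨hx₁0, hx₁1⟩ := hx₁
  set g : ℝ → ℝ := fun t => t⁻¹ * (1 - t^2)^2 with hg_def
  set w : ℝ → ℝ := fun t => g t * y₁' t with hw_def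
  have hgpos : ∀ t ∈ Set.Ioo (0:ℝ) 1, 0 < g t := by
    rintro t ⟨h0, h1⟩
    have h2 : (0:ℝ) < 1 - t^2 := by nlinarith
    simp only [hg_def]
    positivity
  -- derivative of w on (0,1)
  have hwderiv : ∀ t ∈ Set.Ioo (0:ℝ) 1,
      HasDerivAt w (g t * (y₁'' t - t⁻¹ * (1 + 3*t^2) * (1 - t^2)⁻¹ * y₁' t)) t := by
    rintro t ⟨h0, h1⟩
    have hne : t ≠ 0 := ne_of_gt h0
    have h2 : (0:ℝ) < 1 - t^2 := by nlinarith
    have h2ne : (1:ℝ) - t^2 ≠ 0 := ne_of_gt h2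
    have hsq : HasDerivAt (fun s : ℝ => s^2) (2*t) t := by
      simpa using hasDerivAt_pow 2 t
    have hin : HasDerivAt (fun s : ℝ => 1 - s^2) (-(2*t)) t := hsq.const_sub 1
    have hpw : HasDerivAt (fun s : ℝ => (1 - s^2)^2) (2 * (1 - t^2) * (-(2*t))) t := by
      simpa using hin.fun_pow 2
    have hinv : HasDerivAt (fun s : ℝ => s⁻¹) (-(t^2)⁻¹) t := by
      simpa using hasDerivAt_inv hne
    have hg : HasDerivAt g (-(t^2)⁻¹ * (1 - t^2)^2 + t⁻¹ * (2 * (1 - t^2) * (-(2*t)))) t :=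
      hinv.mul hpw
    have hw : HasDerivAt w
        ((-(t^2)⁻¹ * (1 - t^2)^2 + t⁻¹ * (2 * (1 - t^2) * (-(2*t)))) * y₁' t
          + g t * y₁'' t) t := hg.mul (hy₁' t ⟨h0, h1⟩)
    convert hw using 1
    simp only [hg_def]
    field_simp
    ring
  -- deriv w ≤ 0 on (x₁,1)
  have hwnonpos : ∀ t ∈ Set.Ioo x₁ 1, deriv w t ≤ 0 := by
    rintro t ⟨ht1, ht2⟩
    have htI : t ∈ Set.Ioo (0:ℝ) 1 := ⟨lt_trans hx₁0 ht1, ht2⟩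
    rw [(hwderiv t htI).deriv]
    have hode := hODE t htI
    have hq : 0 ≤ (1/6) * (y₁' t)^2
        + (1/3) * ((y₂' t)^2 + y₂' t * y₃' t + (y₃' t)^2) := by
      nlinarith [sq_nonneg (y₂' t + y₃' t), sq_nonneg (y₁' t), sq_nonneg (y₂' t),
        sq_nonneg (y₃' t)]
    have hgp := hgpos t htI
    nlinarith
  -- continuity of w on [x₁, 1)
  have hsub : Set.Ico x₁ 1 ⊆ Set.Icc (0:ℝ) 1 := fun t ht =>
    ⟨le_of_lt (lt_of_lt_of_le hx₁0 ht.1), le_of_lt ht.2⟩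
  have hwcont : ContinuousOn w (Set.Ico x₁ 1) := by
    apply ContinuousOn.mul
    · apply ContinuousOn.mul
      · exact ContinuousOn.inv₀ continuousOn_id
          (fun t ht => ne_of_gt (lt_of_lt_of_le hx₁0 ht.1))
      · exact ((continuous_const.sub (continuous_pow 2)).pow 2).continuousOn
    · exact hc₁.mono hsub
  -- w antitone on [x₁,1)
  have hanti : AntitoneOn w (Set.Ico x₁ 1) := by
    apply antitoneOn_of_deriv_nonpos (convex_Ico _ _) hwcont
    · rw [interior_Ico]
      exact fun t ht =>
        ((hwderiv t ⟨lt_trans hx₁0 ht.1, ht.2⟩).differentiableAt).differentiableWithinAt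
    · rw [interior_Ico]; exact hwnonpos
  have hwx₁ : w x₁ = 0 := by simp [hw_def, hzero]
  -- w = 0 on [x₁, 1)
  have hw0 : ∀ x ∈ Set.Ico x₁ 1, w x = 0 := by
    rintro x ⟨hxl, hxr⟩
    have hle : w x ≤ 0 := by
      have := hanti ⟨le_refl x₁, hx₁1⟩ ⟨hxl, hxr⟩ hxl
      linarith [hwx₁ ▸ this]
    have hcl : (1:ℝ) ∈ closure (Set.Ioo x 1) := by
      rw [closure_Ioo (ne_of_lt hxr)]
      exact ⟨le_of_lt hxr, le_refl 1⟩
    haveI hnb : Filter.NeBot (nhdsWithin 1 (Set.Ioo x 1)) :=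
      mem_closure_iff_nhdsWithin_neBot.mp hcl
    have hsub' : Set.Ioo x 1 ⊆ Set.Icc (0:ℝ) 1 := fun t ht =>
      ⟨le_of_lt (lt_of_lt_of_le hx₁0 (le_of_lt (lt_of_le_of_lt hxl ht.1))), le_of_lt ht.2⟩
    have hgc : ContinuousAt g 1 := by
      apply ContinuousAt.mul
      · exact continuousAt_inv₀ one_ne_zero
      · exact ((continuous_const.sub (continuous_pow 2)).pow 2).continuousAt
    have hyc : Filter.Tendsto y₁' (nhdsWithin 1 (Set.Ioo x 1)) (nhds (y₁' 1)) :=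
      ((hc₁ 1 ⟨zero_le_one, le_refl 1⟩).mono hsub')
    have htend : Filter.Tendsto w (nhdsWithin 1 (Set.Ioo x 1)) (nhds 0) := by
      have := (hgc.tendsto.mono_left nhdsWithin_le_nhds).mul hyc
      simpa [hg_def] using this
    have hge : (0:ℝ) ≤ w x := by
      refine le_of_tendsto htend ?_
      filter_upwards [self_mem_nhdsWithin] with t ht
      exact hanti ⟨hxl, hxr⟩ ⟨le_trans hxl (le_of_lt ht.1), ht.2⟩ (le_of_lt ht.1)
    linarith
  -- conclude
  rintro x ⟨hxl, hxr⟩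
  rcases lt_or_eq_of_le hxr with hlt | heq
  · have hwx := hw0 x ⟨hxl, hlt⟩
    have hgp := hgpos x ⟨lt_of_lt_of_le hx₁0 hxl, hlt⟩
    have : g x * y₁' x = 0 := hwx
    rcases mul_eq_zero.mp this with h | h
    · exact absurd h (ne_of_gt hgp)
    · exact h
  · subst heq
    -- y₁' 1 = 0 by continuity, since y₁' = 0 on [x₁,1)
    have hcl : (1:ℝ) ∈ closure (Set.Ico x₁ 1) := by
      rw [closure_Ico (ne_of_lt hx₁1)]
      exact ⟨le_of_lt hx₁1, le_refl 1⟩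
    haveI hnb : Filter.NeBot (nhdsWithin 1 (Set.Ico x₁ 1)) :=
      mem_closure_iff_nhdsWithin_neBot.mp hcl
    have hyc : Filter.Tendsto y₁' (nhdsWithin 1 (Set.Ico x₁ 1)) (nhds (y₁' 1)) :=
      (hc₁ 1 ⟨zero_le_one, le_refl 1⟩).mono hsub
    have hy0 : Filter.Tendsto y₁' (nhdsWithin 1 (Set.Ico x₁ 1)) (nhds 0) := by
      apply Filter.Tendsto.congr' _ tendsto_const_nhds
      filter_upwards [self_mem_nhdsWithin] with t ht
      have := hw0 t ht
      have hgp := hgpos t ⟨lt_of_lt_of_le hx₁0 ht.1, ht.2⟩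
      rcases mul_eq_zero.mp this with h | h
      · exact absurd h (ne_of_gt hgp)
      · exact h.symm
    exact tendsto_nhds_unique hyc hy0
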